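/- Let W be a finite string over {A, B} (containing no letter X). Then the cyclic values in the tight puzzle satisfy |(W)| = |(W̄)|, where W̄ is the reversed string. -/

import Mathlib

/-!
The "tight puzzle" of Schwartz–Tabachnikov.  Strings over the alphabet `{A, X, B}`;
word list (coefficient, weight): `X (1,0)`, `XA (1,1)`, `XAA (1,1)`, `AXA (2,1)`,
`AAA (-1,1)`, `BA (-1,1)`, `ABA (-1,1)`, `XXA (-1,1)`; in a parsing the word `X` may
never be immediately followed by the word `XA` or the word `BA`.
-/

open scoped Classical

/-- The three-letter alphabet. -/
inductive PLetter | A | X | B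
deriving DecidableEq

/-- Strings over the alphabet. -/
abbrev PWord := List PLetter

/-- The tight puzzle word list. -/
def tightWords : List PWord :=
  [[PLetter.X], [PLetter.X, PLetter.A], [PLetter.X, PLetter.A, PLetter.A],
   [PLetter.A, PLetter.X, PLetter.A], [PLetter.A, PLetter.A, PLetter.A],
   [PLetter.B, PLetter.A], [PLetter.A, PLetter.B, PLetter.A],
   [PLetter.X, PLetter.X, PLetter.A]]

/-- Coefficients of the words of the tight puzzle (`AXA ↦ 2`; `AAA, BA, ABA, XXA ↦ -1`;
`X, XA, XAA ↦ 1`). -/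
def tightCoeff (w : PWord) : ℤ :=
  if w = [PLetter.A, PLetter.X, PLetter.A] then 2
  else if w = [PLetter.A, PLetter.A, PLetter.A] ∨ w = [PLetter.B, PLetter.A] ∨
      w = [PLetter.A, PLetter.B, PLetter.A] ∨ w = [PLetter.X, PLetter.X, PLetter.A] then -1
  else 1

/-- Weights of the words: the word `X` has weight `0`, all other words weight `1`. -/
def wordWt (w : PWord) : ℕ := if w = [PLetter.X] then 0 else 1

/-- The forbidden adjacency: the word `X` immediately followed by `XA` or `BA`. -/
def Bad (u v : PWord) : Prop :=
  u = [PLetter.X] ∧ (v = [PLetter.X, PLetter.A] ∨ v = [PLetter.B, PLetter.A])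

/-- The contribution `coefficient · t^weight ∈ ℤ[t]` of a parsing `L`. -/
noncomputable def parseVal (c : PWord → ℤ) (L : List PWord) : Polynomial ℤ :=
  Polynomial.C ((L.map c).prod) * Polynomial.X ^ ((L.map wordWt).sum)

/-- `L` is a parsing in the tight puzzle: all its words are on the word list and the
forbidden adjacency never occurs. -/
def TightChain (L : List PWord) : Prop :=
  (∀ w ∈ L, w ∈ tightWords) ∧ List.Chain' (fun u v => ¬ Bad u v) L

/-- The *core* of a string: what remains after deleting all leading and trailing `X`s. -/
def core (s : PWord) : PWord :=
  ((s.dropWhile (· == PLetter.X)).reverse.dropWhile (· == PLetter.X)).reverse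

/-- `L` is a parsing of the bi-infinite string `⋯XX·W·XX⋯` (with the infinitely many
padding `X`s parsed as copies of the word `X` and trimmed away): the words of `L`
concatenate to `W` up to padding by `X`s on either side, `L` neither starts nor ends
with the word `X`, and (because of the padding `X`-words on the left) the first word
of `L` is not `XA` or `BA`. -/
def IsOpenParsing (W : PWord) (L : List PWord) : Prop :=
  TightChain L ∧ core L.flatten = core W ∧
  ∀ h : L ≠ [],
    L.head h ≠ [PLetter.X] ∧ L.head h ≠ [PLetter.X, PLetter.A] ∧
    L.head h ≠ [PLetter.B, PLetter.A] ∧ L.getLast h ≠ [PLetter.X]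

/-- `(r, L)` is a parsing of the cyclic string `(W)`: reading the necklace of the
letters of `W` starting at position `r`, the words of `L` concatenate to it, the
forbidden adjacency does not occur (cyclically), and `r < (last word).length`
(so that every parsing of the necklace is counted exactly once). -/
def IsCyclicParsing (W : PWord) (r : ℕ) (L : List PWord) : Prop :=
  TightChain L ∧
  ∃ h : L ≠ [], L.flatten = W.rotate r ∧ r < (L.getLast h).length ∧
    ¬ Bad (L.getLast h) (L.head h)

/-- `L` is a parsing of the locked string `[W]`: the words of `L` concatenate exactly
to `W`, no padding allowed. -/
def IsLockedParsing (W : PWord) (L : List PWord) : Prop :=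
  TightChain L ∧ L.flatten = W

/-- The nine words of both puzzles, as a function (used to enumerate parsings). -/
def wordOf : Fin 9 → PWord :=
  ![[PLetter.X], [PLetter.X, PLetter.A], [PLetter.X, PLetter.A, PLetter.A],
    [PLetter.X, PLetter.B, PLetter.A], [PLetter.A, PLetter.X, PLetter.A],
    [PLetter.A, PLetter.A, PLetter.A], [PLetter.B, PLetter.A],
    [PLetter.A, PLetter.B, PLetter.A], [PLetter.X, PLetter.X, PLetter.A]]

/-- The open value `|W| ∈ ℤ[t]`: the sum of `coefficient · t^weight` over all parsings
of the bi-infinite string `⋯XX·W·XX⋯` (any such parsing consists of at most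
`W.length + 2` words). -/
noncomputable def openVal (W : PWord) : Polynomial ℤ :=
  ∑ k ∈ Finset.range (W.length + 3), ∑ f : Fin k → Fin 9,
    if IsOpenParsing W ((List.ofFn f).map wordOf) then
      parseVal tightCoeff ((List.ofFn f).map wordOf)
    else 0

/-- The cyclic value `|(W)| ∈ ℤ[t]`: the sum of `coefficient · t^weight` over all
parsings of the cyclic string `(W)`. -/
noncomputable def cycVal (W : PWord) : Polynomial ℤ :=
  ∑ r ∈ Finset.range W.length, ∑ k ∈ Finset.range (W.length + 1), ∑ f : Fin k → Fin 9,
    if IsCyclicParsing W r ((List.ofFn f).map wordOf) then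
      parseVal tightCoeff ((List.ofFn f).map wordOf)
    else 0

/-- The locked value `|[W]| ∈ ℤ[t]`: the sum of `coefficient · t^weight` over all
parsings whose concatenation is exactly `W`. -/
noncomputable def lockVal (W : PWord) : Polynomial ℤ :=
  ∑ k ∈ Finset.range (W.length + 1), ∑ f : Fin k → Fin 9,
    if IsLockedParsing W ((List.ofFn f).map wordOf) then
      parseVal tightCoeff ((List.ofFn f).map wordOf)
    else 0

namespace RevAux
open PLetter List

abbrev WA : PWord := [A,A,A]
abbrev WB : PWord := [B,A]
abbrev WC : PWord := [A,B,A]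

def IsTile (w : PWord) : Prop := w = WA ∨ w = WB ∨ w = WC

noncomputable def val (k : ℕ) : Polynomial ℤ := Polynomial.C ((-1 : ℤ)^k) * Polynomial.X ^ k

def canon (ms : List ℕ) : PWord := (ms.map (fun m => B :: List.replicate m A)).flatten

def canon' (ms : List ℕ) : PWord := (ms.map (fun m => List.replicate m A ++ [B])).flatten

def pstr (u : ℕ) (ms : List ℕ) : PWord := List.replicate u A ++ canon ms

def parseL : ℕ → List ℕ → Option (List PWord)
  | u, [] => if u % 3 = 0 then some (List.replicate (u/3) WA) else none
  | u, m :: t => if m = 0 ∨ u % 3 = 2 then none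
      else (parseL (m-1) t).map
        (fun L => List.replicate (u/3) WA ++ (if u % 3 = 0 then WB else WC) :: L)

def lastInc : ℕ → List ℕ → ℕ
  | u, [] => u
  | _, m :: t => lastInc (m-1) t

def Kst (ms : List ℕ) : ℕ := (ms.map (fun m => (m-1)/3)).sum + ms.length

lemma Kst_append (s t : List ℕ) : Kst (s ++ t) = Kst s + Kst t := by
  simp [Kst]; ring

lemma Kst_cons (m : ℕ) (t : List ℕ) : Kst (m :: t) = (m-1)/3 + 1 + Kst t := by
  simp [Kst]; ring

lemma Kst_single (m : ℕ) : Kst [m] = (m-1)/3 + 1 := by simp [Kst]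

lemma canon_cons (m : ℕ) (t : List ℕ) :
    canon (m :: t) = B :: (List.replicate m A ++ canon t) := by
  simp [canon]

lemma canon_append (s t : List ℕ) : canon (s ++ t) = canon s ++ canon t := by
  simp [canon]

lemma canon'_cons (m : ℕ) (t : List ℕ) :
    canon' (m :: t) = List.replicate m A ++ ([B] ++ canon' t) := by
  simp [canon']

lemma canon'_nil : canon' [] = [] := rfl
lemma canon_nil : canon [] = [] := rfl

lemma canon_head (ms : List ℕ) : canon ms = [] ∨ ∃ s, canon ms = B :: s := by
  cases ms with
  | nil => exact Or.inl rfl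
  | cons m t => exact Or.inr ⟨_, canon_cons m t⟩

lemma flatten_replicate_WA (k : ℕ) :
    (List.replicate k WA).flatten = List.replicate (3*k) A := by
  induction k with
  | zero => rfl
  | succ n ih =>
    rw [List.replicate_succ, List.flatten_cons, ih]
    rw [show 3*(n+1) = 3 + 3*n by ring, List.replicate_add]
    rfl

/-- soundness of `parseL` -/
lemma parseL_sound : ∀ (ms : List ℕ) (u : ℕ) (L : List PWord),
    parseL u ms = some L → L.flatten = pstr u ms ∧ ∀ w ∈ L, IsTile w := by
  intro ms
  induction ms with
  | nil =>
    intro u L h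
    simp only [parseL] at h
    split at h
    · rename_i hu
      obtain rfl : List.replicate (u/3) WA = L := by simpa using h
      refine ⟨?_, ?_⟩
      · rw [flatten_replicate_WA]
        have : 3 * (u/3) = u := by omega
        rw [this]; simp [pstr, canon]
      · intro w hw
        rw [List.eq_of_mem_replicate hw]; exact Or.inl rfl
    · exact absurd h (by simp)
  | cons m t ih =>
    intro u L h
    simp only [parseL] at h
    split at h
    · exact absurd h (by simp)
    · rename_i hc
      push_neg at hc
      obtain ⟨hm, hu⟩ := hc
      rcases hL' : parseL (m-1) t with _ | L'
      · rw [hL'] at h; exact absurd h (by simp)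
      · rw [hL'] at h
        simp only [Option.map_some, Option.some.injEq] at h
        obtain ⟨hfl, htile⟩ := ih (m-1) L' hL'
        subst h
        constructor
        · rw [List.flatten_append, flatten_replicate_WA, List.flatten_cons, hfl]
          simp only [pstr, canon_cons]
          have hu3 : u % 3 = 0 ∨ u % 3 = 1 := by omega
          have hrep : A :: List.replicate (m-1) A = List.replicate m A := by
            cases m with
            | zero => omega
            | succ n => simp [List.replicate_succ]
          rcases hu3 with h0 | h1
          · rw [if_pos h0]
            show List.replicate (3*(u/3)) A ++ (B :: A :: (List.replicate (m-1) A ++ canon t)) = _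
            rw [show (A :: (List.replicate (m-1) A ++ canon t)) = (A :: List.replicate (m-1) A) ++ canon t from rfl, hrep]
            have : 3*(u/3) = u := by omega
            rw [this]
          · rw [if_neg (by omega)]
            obtain ⟨u', rfl⟩ : ∃ u', u = u' + 1 := ⟨u - 1, by omega⟩
            show List.replicate (3*((u'+1)/3)) A ++ (A :: B :: A :: (List.replicate (m-1) A ++ canon t)) = _
            rw [show (A :: (List.replicate (m-1) A ++ canon t)) = (A :: List.replicate (m-1) A) ++ canon t from rfl, hrep]
            rw [show 3*((u'+1)/3) = u' by omega]
            rw [List.replicate_succ', List.append_assoc]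
            rfl
        · intro w hw
          rcases List.mem_append.1 hw with hw | hw
          · rw [List.eq_of_mem_replicate hw]; exact Or.inl rfl
          · rcases List.mem_cons.1 hw with rfl | hw
            · split <;> simp [IsTile]
            · exact htile w hw


lemma parseL_step (ms : List ℕ) (u : ℕ) :
    parseL (u+3) ms = (parseL u ms).map (fun L => WA :: L) := by
  have h1 : (u+3)/3 = u/3 + 1 := Nat.add_div_right u (by norm_num)
  have h2 : (u+3)%3 = u%3 := Nat.add_mod_right u 3
  cases ms with
  | nil =>
    simp only [parseL, h1, h2]
    split
    · simp [List.replicate_succ]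
    · simp
  | cons m t =>
    simp only [parseL, h1, h2]
    split
    · simp
    · rcases parseL (m-1) t with _ | L' <;> simp [List.replicate_succ]

/-- completeness / uniqueness of `parseL` -/
lemma parseL_complete : ∀ (L : List PWord), (∀ w ∈ L, IsTile w) →
    ∀ (u : ℕ) (ms : List ℕ), L.flatten = pstr u ms → parseL u ms = some L := by
  intro L
  induction L with
  | nil =>
    intro _ u ms h
    rw [List.flatten_nil, pstr] at h
    have hu : u = 0 := by
      by_contra hu
      obtain ⟨u', rfl⟩ : ∃ u', u = u' + 1 := ⟨u - 1, by omega⟩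
      rw [List.replicate_succ] at h
      exact absurd h.symm (by simp)
    subst hu
    rcases ms with _ | ⟨m, t⟩
    · simp [parseL]
    · rw [canon_cons] at h
      exact absurd h.symm (by simp)
  | cons w L' ih =>
    intro htile u ms h
    have hw : IsTile w := htile w (by simp)
    have htile' : ∀ x ∈ L', IsTile x := fun x hx => htile x (by simp [hx])
    rw [List.flatten_cons] at h
    rcases u with _ | _ | _ | u
    · -- u = 0
      rw [pstr, List.replicate_zero, List.nil_append] at h
      rcases ms with _ | ⟨m, t⟩
      · rcases hw with rfl | rfl | rfl <;> exact absurd h (by simp [canon_nil])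
      · rw [canon_cons] at h
        rcases hw with rfl | rfl | rfl
        · exact absurd h (by simp)
        · -- w = WB
          simp only [List.cons_append, List.nil_append, List.cons.injEq, true_and] at h
          obtain ⟨m', rfl⟩ : ∃ m', m = m' + 1 := by
            rcases m with _ | m'
            · exfalso
              rw [List.replicate_zero, List.nil_append] at h
              rcases canon_head t with h' | ⟨s, h'⟩ <;> rw [h'] at h
              · exact absurd h (by simp)
              · exact absurd h (by simp)
            · exact ⟨m', rfl⟩
          rw [List.replicate_succ, List.cons_append, List.cons.injEq] at h
          have := ih htile' m' t (by simpa [pstr] using h.2)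
          simp only [parseL, show m' + 1 - 1 = m' from rfl, this]
          simp
        · exact absurd h (by simp)
    · -- u = 1
      rw [pstr, List.replicate_one, List.singleton_append] at h
      rcases hw with rfl | rfl | rfl
      · -- w = WA : [A,A] ++ fl = canon ms, impossible
        exfalso
        simp only [List.cons_append, List.cons.injEq, true_and] at h
        rcases canon_head ms with h' | ⟨s, h'⟩ <;> rw [h'] at h
        · exact absurd h (by simp)
        · exact absurd h (by simp)
      · exact absurd h (by simp)
      · -- w = WC
        simp only [List.cons_append, List.cons.injEq, true_and] at h
        rcases ms with _ | ⟨m, t⟩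
        · exact absurd h (by simp [canon_nil])
        · rw [canon_cons, List.cons.injEq] at h
          obtain ⟨m', rfl⟩ : ∃ m', m = m' + 1 := by
            rcases m with _ | m'
            · exfalso
              have h2 := h.2
              rw [List.replicate_zero, List.nil_append] at h2
              rcases canon_head t with h' | ⟨s, h'⟩ <;> rw [h'] at h2
              · exact absurd h2 (by simp)
              · exact absurd h2 (by simp)
            · exact ⟨m', rfl⟩
          have h2 := h.2
          rw [List.replicate_succ, List.cons_append, List.cons.injEq] at h2
          have := ih htile' m' t (by simpa [pstr] using h2.2)
          simp only [parseL, show m' + 1 - 1 = m' from rfl, this]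
          simp
    · -- u = 2
      exfalso
      rw [pstr, show List.replicate 2 A = [A, A] from rfl] at h
      rcases hw with rfl | rfl | rfl
      · simp only [List.cons_append, List.cons.injEq, true_and] at h
        rcases canon_head ms with h' | ⟨s, h'⟩ <;> rw [h'] at h
        · exact absurd h (by simp)
        · exact absurd h (by simp)
      · exact absurd h (by simp)
      · exact absurd h (by simp)
    · -- u + 3
      have hps : pstr (u+3) ms = A :: A :: A :: pstr u ms := by
        rw [pstr, pstr, show u + 3 = 3 + u by ring, List.replicate_add]
        rfl
      rw [hps] at h
      rcases hw with rfl | rfl | rfl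
      · simp only [List.cons_append, List.nil_append, List.cons.injEq, true_and] at h
        rw [parseL_step, ih htile' u ms h]
        rfl
      · exact absurd h (by simp)
      · exact absurd h (by simp)

lemma parseL_isSome : ∀ (t : List ℕ) (u e : ℕ),
    (parseL u (t ++ [e])).isSome ↔ (u % 3 ≠ 2 ∧ (∀ m ∈ t, m % 3 ≠ 0) ∧ e % 3 = 1) := by
  intro t
  induction t with
  | nil =>
    intro u e
    simp only [List.nil_append, parseL]
    constructor
    · intro h
      split at h
      · simp at h
      · rename_i hc
        push_neg at hc
        rw [Option.isSome_map] at h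
        split at h
        · rename_i he1
          exact ⟨hc.2, by simp, by omega⟩
        · simp at h
    · rintro ⟨h1, -, h3⟩
      rw [if_neg (by omega), Option.isSome_map, if_pos (show (e-1) % 3 = 0 by omega)]
      rfl
  | cons m t' ih =>
    intro u e
    simp only [List.cons_append, parseL, List.append_eq]
    constructor
    · intro h
      split at h
      · simp at h
      · rename_i hc
        push_neg at hc
        rw [Option.isSome_map] at h
        have := (ih (m-1) e).1 h
        refine ⟨hc.2, ?_, this.2.2⟩
        intro x hx
        rcases List.mem_cons.1 hx with rfl | hx
        · have := this.1; omega
        · exact this.2.1 x hx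
    · rintro ⟨h1, h2, h3⟩
      have hm : m % 3 ≠ 0 := h2 m (by simp)
      rw [if_neg (by omega), Option.isSome_map, ih]
      exact ⟨by omega, fun x hx => h2 x (by simp [hx]), h3⟩

lemma parseL_length : ∀ (ms : List ℕ) (u : ℕ) (L : List PWord),
    parseL u ms = some L → L.length = u/3 + Kst ms := by
  intro ms
  induction ms with
  | nil =>
    intro u L h
    simp only [parseL] at h
    split at h
    · obtain rfl : List.replicate (u/3) WA = L := by simpa using h
      simp [Kst]
    · exact absurd h (by simp)
  | cons m t ih =>
    intro u L h
    simp only [parseL] at h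
    split at h
    · exact absurd h (by simp)
    · rcases hL' : parseL (m-1) t with _ | L'
      · rw [hL'] at h; exact absurd h (by simp)
      · rw [hL'] at h
        simp only [Option.map_some, Option.some.injEq] at h
        subst h
        rw [Kst_cons]
        have := ih (m-1) L' hL'
        simp [this]
        omega

lemma getLast?_replicate_pos {α : Type*} (a : α) (k : ℕ) (hk : 1 ≤ k) :
    (List.replicate k a).getLast? = some a := by
  obtain ⟨k', rfl⟩ : ∃ k', k = k' + 1 := ⟨k - 1, by omega⟩
  rw [List.replicate_succ', List.getLast?_concat]

lemma parseL_getLast : ∀ (t : List ℕ) (u e : ℕ) (L : List PWord),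
    parseL u (t ++ [e]) = some L → L ≠ [] ∧
      L.getLast? = some (if 1 ≤ (e-1)/3 then WA
        else if (lastInc u t) % 3 = 0 then WB else WC) := by
  intro t
  induction t with
  | nil =>
    intro u e L h
    simp only [List.nil_append, parseL] at h
    split at h
    · exact absurd h (by simp)
    · rename_i hc
      push_neg at hc
      by_cases he : (e-1) % 3 = 0
      · rw [if_pos he, Option.map_some] at h
        simp only [Option.some.injEq] at h
        subst h
        refine ⟨by simp, ?_⟩
        rw [List.getLast?_append_of_ne_nil _
          (by simp : ((if u % 3 = 0 then WB else WC) :: List.replicate ((e-1)/3) WA) ≠ [])]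
        by_cases hk : 1 ≤ (e-1)/3
        · rw [if_pos hk, show ((if u % 3 = 0 then WB else WC) :: List.replicate ((e-1)/3) WA)
                = [if u % 3 = 0 then WB else WC] ++ List.replicate ((e-1)/3) WA from rfl]
          rw [List.getLast?_append_of_ne_nil _ (by
              intro hh
              have := congrArg List.length hh
              simp at this
              omega), getLast?_replicate_pos _ _ hk]
        · rw [if_neg hk, show (e-1)/3 = 0 by omega, List.replicate_zero]
          rfl
      · rw [if_neg he] at h
        exact absurd h (by simp)
  | cons m t' ih =>
    intro u e L h
    simp only [List.cons_append, parseL, List.append_eq] at h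
    split at h
    · exact absurd h (by simp)
    · rcases hL' : parseL (m-1) (t' ++ [e]) with _ | L'
      · rw [hL'] at h; exact absurd h (by simp)
      · rw [hL'] at h
        simp only [Option.map_some, Option.some.injEq] at h
        subst h
        obtain ⟨hne, hgl⟩ := ih (m-1) e L' hL'
        refine ⟨by simp, ?_⟩
        rw [List.getLast?_append_of_ne_nil _ (by simp : (_ :: L') ≠ [])]
        rw [show ((if u % 3 = 0 then WB else WC) :: L')
              = [if u % 3 = 0 then WB else WC] ++ L' from rfl]
        rw [List.getLast?_append_of_ne_nil _ hne, hgl]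
        rfl

noncomputable def cy (W : PWord) (r : ℕ) : Polynomial ℤ :=
  ∑ k ∈ Finset.range (W.length + 1), ∑ f : Fin k → Fin 9,
    if IsCyclicParsing W r ((List.ofFn f).map wordOf) then
      parseVal tightCoeff ((List.ofFn f).map wordOf)
    else 0

lemma cycVal_eq_sum_cy (W : PWord) : cycVal W = ∑ r ∈ Finset.range W.length, cy W r := rfl

lemma tile_mem_tightWords {w : PWord} (h : IsTile w) : w ∈ tightWords := by
  rcases h with rfl | rfl | rfl <;> simp [tightWords]

lemma tile_ne_nil {w : PWord} (h : IsTile w) : w ≠ [] := by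
  rcases h with rfl | rfl | rfl <;> simp

lemma tile_ne_X {w : PWord} (h : IsTile w) : w ≠ [X] := by
  rcases h with rfl | rfl | rfl <;> simp

lemma tile_len_le {w : PWord} (h : IsTile w) : w.length ≤ 3 := by
  rcases h with rfl | rfl | rfl <;> simp

lemma tile_len_ge {w : PWord} (h : IsTile w) : 2 ≤ w.length := by
  rcases h with rfl | rfl | rfl <;> simp

lemma tile_coeff {w : PWord} (h : IsTile w) : tightCoeff w = -1 := by
  rcases h with rfl | rfl | rfl <;> simp [tightCoeff]

lemma tile_wt {w : PWord} (h : IsTile w) : wordWt w = 1 := by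
  rcases h with rfl | rfl | rfl <;> simp [wordWt]

lemma tile_getLast? {w : PWord} (h : IsTile w) : w.getLast? = some A := by
  rcases h with rfl | rfl | rfl <;> rfl

lemma tiles_prod : ∀ (L : List PWord), (∀ w ∈ L, IsTile w) →
    (L.map tightCoeff).prod = (-1 : ℤ)^L.length := by
  intro L
  induction L with
  | nil => simp
  | cons w L' ih =>
    intro h
    rw [List.map_cons, List.prod_cons, tile_coeff (h w (by simp)),
      ih (fun x hx => h x (by simp [hx])), List.length_cons, pow_succ]
    ring

lemma tiles_sum : ∀ (L : List PWord), (∀ w ∈ L, IsTile w) →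
    (L.map wordWt).sum = L.length := by
  intro L
  induction L with
  | nil => simp
  | cons w L' ih =>
    intro h
    rw [List.map_cons, List.sum_cons, tile_wt (h w (by simp)),
      ih (fun x hx => h x (by simp [hx])), List.length_cons]
    omega

lemma parseVal_tiles (L : List PWord) (h : ∀ w ∈ L, IsTile w) :
    parseVal tightCoeff L = val L.length := by
  rw [parseVal, val, tiles_prod L h, tiles_sum L h]

lemma wordOf_inj : Function.Injective wordOf := by decide

def idx (w : PWord) : Fin 9 := if w = WA then 5 else if w = WB then 6 else 7

lemma wordOf_idx {w : PWord} (h : IsTile w) : wordOf (idx w) = w := by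
  rcases h with rfl | rfl | rfl <;> rfl

lemma encode_tiles (L : List PWord) (h : ∀ w ∈ L, IsTile w) :
    (List.ofFn (fun i : Fin L.length => idx (L.get i))).map wordOf = L := by
  rw [List.map_ofFn]
  have : (wordOf ∘ fun i : Fin L.length => idx (L.get i)) = L.get := by
    funext i
    exact wordOf_idx (h _ (L.get_mem i))
  rw [this, List.ofFn_get]

lemma tw_len : ∀ w ∈ tightWords, w.length ≤ 3 := by decide

lemma ICP_r_lt_3 {W : PWord} {r : ℕ} {L : List PWord} (h : IsCyclicParsing W r L) :
    r < 3 := by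
  rcases h with ⟨⟨hmem, _⟩, hne, _, hr, _⟩
  exact lt_of_lt_of_le hr (tw_len _ (hmem _ (List.getLast_mem hne)))

lemma ICP_words_tiles {W : PWord} {r : ℕ} {L : List PWord}
    (hW : ∀ l ∈ W, l ≠ X) (h : IsCyclicParsing W r L) : ∀ w ∈ L, IsTile w := by
  rcases h with ⟨⟨hmem, _⟩, hne, hfl, _, _⟩
  intro w hw
  have hXf : ∀ l ∈ w, l ≠ X := by
    intro l hl
    have : l ∈ L.flatten := (List.sublist_flatten_of_mem hw).subset hl
    rw [hfl] at this
    exact hW l ((List.rotate_perm W r).subset this)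
  have := hmem w hw
  simp only [tightWords, List.mem_cons, List.not_mem_nil, or_false] at this
  rcases this with rfl|rfl|rfl|rfl|rfl|rfl|rfl|rfl
  · exact absurd rfl (hXf X (by simp))
  · exact absurd rfl (hXf X (by simp))
  · exact absurd rfl (hXf X (by simp))
  · exact absurd rfl (hXf X (by simp))
  · exact Or.inl rfl
  · exact Or.inr (Or.inl rfl)
  · exact Or.inr (Or.inr rfl)
  · exact absurd rfl (hXf X (by simp))

lemma len_le_flatten : ∀ (L : List PWord), (∀ w ∈ L, w ≠ []) → L.length ≤ L.flatten.length := by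
  intro L
  induction L with
  | nil => simp
  | cons w L' ih =>
    intro h
    rw [List.flatten_cons, List.length_append, List.length_cons]
    have h1 : 1 ≤ w.length := by
      have := h w (by simp)
      cases w
      · exact absurd rfl this
      · simp
    have := ih (fun x hx => h x (by simp [hx]))
    omega

lemma ICP_len_le {W : PWord} {r : ℕ} {L : List PWord}
    (hW : ∀ l ∈ W, l ≠ X) (h : IsCyclicParsing W r L) : L.length ≤ W.length := by
  have htile := ICP_words_tiles hW h
  rcases h with ⟨-, hne, hfl, -, -⟩
  have := len_le_flatten L (fun w hw => tile_ne_nil (htile w hw))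
  rw [hfl, List.length_rotate] at this
  exact this

lemma cy_zero {W : PWord} {r : ℕ} (h : ∀ L, ¬ IsCyclicParsing W r L) : cy W r = 0 :=
  Finset.sum_eq_zero (fun _ _ => Finset.sum_eq_zero (fun _ _ => if_neg (h _)))

lemma cy_eq_val {W : PWord} {r : ℕ} (hW : ∀ l ∈ W, l ≠ X) (L0 : List PWord)
    (h0 : IsCyclicParsing W r L0) (huniq : ∀ L, IsCyclicParsing W r L → L = L0) :
    cy W r = val L0.length := by
  have htile := ICP_words_tiles hW h0
  have hlen : L0.length ≤ W.length := ICP_len_le hW h0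
  have hmap : (List.ofFn (fun i : Fin L0.length => idx (L0.get i))).map wordOf = L0 :=
    encode_tiles L0 htile
  rw [cy]
  rw [Finset.sum_eq_single_of_mem L0.length (Finset.mem_range.2 (by omega))]
  · rw [Finset.sum_eq_single_of_mem (fun i : Fin L0.length => idx (L0.get i))
      (Finset.mem_univ _)]
    · rw [hmap, if_pos h0, parseVal_tiles L0 htile]
    · intro f _ hf
      rw [if_neg]
      intro hicp
      apply hf
      have h1 : (List.ofFn f).map wordOf = L0 := huniq _ hicp
      have h2 := h1.trans hmap.symm
      have h3 := List.map_injective_iff.2 wordOf_inj h2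
      exact List.ofFn_inj.1 h3
  · intro k _ hk
    apply Finset.sum_eq_zero
    intro f _
    rw [if_neg]
    intro hicp
    apply hk
    have h1 : (List.ofFn f).map wordOf = L0 := huniq _ hicp
    have := congrArg List.length h1
    simpa using this

lemma flatten_getLast?_A {L : List PWord} (htile : ∀ w ∈ L, IsTile w) (hne : L ≠ []) :
    L.flatten.getLast? = some A := by
  rcases List.eq_nil_or_concat L with rfl | ⟨l, w, rfl⟩
  · exact absurd rfl hne
  · rw [List.concat_eq_append, List.flatten_append]
    have hw : IsTile w := htile w (by simp)
    rw [List.getLast?_append_of_ne_nil _ (by simpa using tile_ne_nil hw)]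
    simpa using tile_getLast? hw

lemma cy_zero_of_last_B {W : PWord} {r : ℕ} (hW : ∀ l ∈ W, l ≠ X)
    (hrot : (W.rotate r).getLast? = some B) : cy W r = 0 := by
  apply cy_zero
  intro L hL
  have htile := ICP_words_tiles hW hL
  rcases hL with ⟨-, hne, hfl, -, -⟩
  have := flatten_getLast?_A htile hne
  rw [hfl, hrot] at this
  simp at this

attribute [irreducible] val

lemma chain'_not_bad : ∀ (L : List PWord), (∀ w ∈ L, w ≠ [X]) →
    L.Chain' (fun u v => ¬ Bad u v) := by
  intro L
  induction L with
  | nil => intro _; exact List.isChain_nil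
  | cons a l ih =>
    intro h
    cases l with
    | nil => exact List.isChain_singleton _
    | cons b l' =>
      apply List.isChain_cons_cons.2
      exact ⟨fun hb => h a (by simp) hb.1, ih (fun w hw => h w (by simp [hw]))⟩

/-- The central evaluation: the value of the inner sum `cy W ρ` when `W` rotated by
`ρ` has the canonical form `A^u (B A^{m₁}) ⋯ (B A^{mₖ}) (B A^e)`. -/
lemma cy_eval {W : PWord} (hW : ∀ l ∈ W, l ≠ X) {ρ u : ℕ} {t : List ℕ} {e : ℕ}
    (hρn : ρ < W.length) (hρ : ρ ≤ 2)
    (hrot : W.rotate ρ = pstr u (t ++ [e])) :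
    cy W ρ = if u % 3 ≠ 2 ∧ (∀ m ∈ t, m % 3 ≠ 0) ∧ e % 3 = 1 ∧
        ρ < (if 1 ≤ (e-1)/3 then 3 else if (lastInc u t) % 3 = 0 then 2 else 3)
      then val (u/3 + Kst (t ++ [e])) else 0 := by
  by_cases hS : u % 3 ≠ 2 ∧ (∀ m ∈ t, m % 3 ≠ 0) ∧ e % 3 = 1
  · have hsome : (parseL u (t++[e])).isSome := (parseL_isSome t u e).2 hS
    obtain ⟨L0, hL0⟩ := Option.isSome_iff_exists.1 hsome
    obtain ⟨hne0, hgl0⟩ := parseL_getLast t u e L0 hL0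
    obtain ⟨hfl0, htile0⟩ := parseL_sound _ _ _ hL0
    have hlen0 := parseL_length _ _ _ hL0
    have hglast : L0.getLast hne0
        = (if 1 ≤ (e-1)/3 then WA else if lastInc u t % 3 = 0 then WB else WC) := by
      have := List.getLast?_eq_getLast (l := L0) hne0
      rw [this] at hgl0
      exact Option.some.inj hgl0
    have hwlen : (L0.getLast hne0).length
        = (if 1 ≤ (e-1)/3 then 3 else if (lastInc u t) % 3 = 0 then 2 else 3) := by
      rw [hglast]
      split_ifs <;> rfl
    have huniq : ∀ L, IsCyclicParsing W ρ L → L = L0 := by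
      intro L hL
      have htile := ICP_words_tiles hW hL
      obtain ⟨-, hne, hfl, -, -⟩ := hL
      have := parseL_complete L htile u (t ++ [e]) (hfl.trans hrot)
      rw [hL0] at this
      exact Option.some.inj this.symm
    by_cases hB : ρ < (if 1 ≤ (e-1)/3 then 3 else if (lastInc u t) % 3 = 0 then 2 else 3)
    · rw [if_pos ⟨hS.1, hS.2.1, hS.2.2, hB⟩]
      have hicp : IsCyclicParsing W ρ L0 := by
        refine ⟨⟨fun w hw => tile_mem_tightWords (htile0 w hw),
          chain'_not_bad L0 (fun w hw => tile_ne_X (htile0 w hw))⟩, hne0,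
          hfl0.trans hrot.symm, ?_, ?_⟩
        · rw [hwlen]; exact hB
        · exact fun hbad => tile_ne_X (htile0 _ (List.getLast_mem hne0)) hbad.1
      rw [cy_eq_val hW L0 hicp huniq, hlen0]
    · rw [if_neg (by tauto)]
      apply cy_zero
      intro L hL
      have hL' := hL
      have hLL0 : L = L0 := huniq L hL
      subst hLL0
      obtain ⟨-, hne, -, hrb, -⟩ := hL'
      rw [hwlen] at hrb
      exact hB hrb
  · rw [if_neg (by tauto)]
    apply cy_zero
    intro L hL
    have htile := ICP_words_tiles hW hL
    obtain ⟨-, hne, hfl, -, -⟩ := hL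
    have hc := parseL_complete L htile u (t ++ [e]) (hfl.trans hrot)
    have : (parseL u (t++[e])).isSome := by rw [hc]; rfl
    rw [parseL_isSome] at this
    exact hS this

lemma canon_length : ∀ (ms : List ℕ), (canon ms).length = ms.length + ms.sum := by
  intro ms
  induction ms with
  | nil => rfl
  | cons m t ih =>
    rw [canon_cons, List.length_cons, List.length_append, List.length_replicate, ih]
    simp [List.sum_cons]
    omega

lemma pstr_length (u : ℕ) (ms : List ℕ) :
    (pstr u ms).length = u + ms.length + ms.sum := by
  rw [pstr, List.length_append, List.length_replicate, canon_length]
  omega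

lemma canon_mem : ∀ (ms : List ℕ), ∀ l ∈ canon ms, l = A ∨ l = B := by
  intro ms
  induction ms with
  | nil => simp [canon_nil]
  | cons m t ih =>
    intro l hl
    rw [canon_cons] at hl
    rcases List.mem_cons.1 hl with rfl | hl
    · exact Or.inr rfl
    · rcases List.mem_append.1 hl with hl | hl
      · exact Or.inl (List.eq_of_mem_replicate hl)
      · exact ih l hl

lemma pstr_noX (u : ℕ) (ms : List ℕ) : ∀ l ∈ pstr u ms, l ≠ X := by
  intro l hl
  rcases List.mem_append.1 hl with hl | hl
  · rw [List.eq_of_mem_replicate hl]; simp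
  · rcases canon_mem ms l hl with rfl | rfl <;> simp

lemma canon_pad (t : List ℕ) (e r : ℕ) :
    canon (t ++ [e]) ++ List.replicate r A = canon (t ++ [e + r]) := by
  rw [canon_append, canon_append, List.append_assoc]
  congr 1
  rw [show canon [e] = B :: List.replicate e A by rw [canon]; simp,
      show canon [e+r] = B :: List.replicate (e+r) A by rw [canon]; simp]
  rw [List.cons_append, List.replicate_add]

lemma rotate_first_form (v r : ℕ) (hr : r ≤ v) (t : List ℕ) (e : ℕ) :
    (pstr v (t ++ [e])).rotate r = pstr (v - r) (t ++ [e + r]) := by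
  have hrlen : r ≤ (pstr v (t++[e])).length := by rw [pstr_length]; omega
  rw [List.rotate_eq_drop_append_take hrlen]
  rw [pstr, show v = r + (v - r) by omega, List.replicate_add, List.append_assoc]
  rw [List.drop_left' (List.length_replicate (n := r) (a := A)), List.take_left' (List.length_replicate (n := r) (a := A))]
  rw [List.append_assoc, canon_pad, pstr]
  congr 2
  omega

lemma rotate_afterB_getLast (v m : ℕ) (ms' : List ℕ)
    (h : v + 1 ≤ (pstr v (m :: ms')).length) :
    ((pstr v (m :: ms')).rotate (v+1)).getLast? = some B := by
  rw [List.rotate_eq_drop_append_take h]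
  have hsh : pstr v (m :: ms')
      = (List.replicate v A ++ [B]) ++ (List.replicate m A ++ canon ms') := by
    rw [pstr, canon_cons]
    simp [List.append_assoc]
  rw [hsh, List.drop_left' (by simp), List.take_left' (by simp)]
  rw [List.getLast?_append_of_ne_nil _ (by simp : (List.replicate v A ++ [B]) ≠ []),
    List.getLast?_concat]

lemma rotate_BB_getLast (s : PWord) :
    ((B :: B :: s : PWord).rotate 2).getLast? = some B := by
  rw [List.rotate_eq_drop_append_take (by simp)]
  show (s ++ [B, B]).getLast? = some B
  rw [show ([B, B] : PWord) = [B] ++ [B] from rfl, ← List.append_assoc, List.getLast?_concat]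

lemma rotate_ABA (m1' : ℕ) (ms' : List ℕ) :
    (pstr 0 ((m1'+1) :: ms')).rotate 2 = pstr m1' (ms' ++ [1]) := by
  have hsh : pstr 0 ((m1'+1) :: ms')
      = [B, A] ++ (List.replicate m1' A ++ canon ms') := by
    rw [pstr, canon_cons, List.replicate_zero, List.nil_append, List.replicate_succ]
    rfl
  have hlen : 2 ≤ (pstr 0 ((m1'+1) :: ms')).length := by rw [pstr_length]; simp; omega
  rw [List.rotate_eq_drop_append_take hlen, hsh]
  rw [List.drop_left' (by simp), List.take_left' (by simp)]
  rw [pstr, List.append_assoc]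
  congr 1
  rw [show ([B, A] : PWord) = canon [1] from rfl, canon_append]

lemma pstr_zero (ms : List ℕ) : pstr 0 ms = canon ms := by
  rw [pstr, List.replicate_zero, List.nil_append]

lemma Kst_nil : Kst [] = 0 := by simp [Kst]

lemma lastInc_concat : ∀ (s : List ℕ) (u a : ℕ), lastInc u (s ++ [a]) = a - 1 := by
  intro s
  induction s with
  | nil => intro u a; rfl
  | cons m s' ih =>
    intro u a
    show lastInc (m-1) (s' ++ [a]) = a - 1
    exact ih (m-1) a

lemma cy_zero_ge3 (W : PWord) (r : ℕ) (h : 3 ≤ r) : cy W r = 0 :=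
  cy_zero (fun L hL => absurd (ICP_r_lt_3 hL) (by omega))

lemma sum_range_three_support (f : ℕ → Polynomial ℤ) (n : ℕ) (h : ∀ r, 3 ≤ r → f r = 0) :
    ∑ r ∈ Finset.range n, f r =
      (if 0 < n then f 0 else 0) + (if 1 < n then f 1 else 0) + (if 2 < n then f 2 else 0) := by
  rcases n with _ | _ | _ | k
  · simp
  · rw [Finset.sum_range_one]; norm_num
  · rw [Finset.sum_range_succ, Finset.sum_range_one]; norm_num
  · have key : ∀ j, ∑ r ∈ Finset.range (3+j), f r = ∑ r ∈ Finset.range 3, f r := by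
      intro j
      induction j with
      | zero => rfl
      | succ i ih =>
        rw [show 3+(i+1) = (3+i)+1 by omega, Finset.sum_range_succ, ih, h _ (by omega), add_zero]
    rw [show k+1+1+1 = 3+k by omega, key, Finset.sum_range_succ, Finset.sum_range_succ,
      Finset.sum_range_one, if_pos (by omega), if_pos (by omega), if_pos (by omega)]

set_option maxHeartbeats 2000000 in
lemma master (v : ℕ) (t : List ℕ) (e : ℕ) :
    cycVal (pstr v (t ++ [e])) =
      if (∀ m ∈ t, m % 3 ≠ 0) ∧ (e + v) % 3 ≠ 0
      then val (Kst t + (e + v - 1)/3 + 1) else 0 := by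
  set W := pstr v (t ++ [e]) with hWdef
  have hW : ∀ l ∈ W, l ≠ X := pstr_noX _ _
  have hnlen : W.length = v + t.length + 1 + t.sum + e := by
    rw [hWdef, pstr_length]
    simp
    omega
  rw [cycVal_eq_sum_cy, sum_range_three_support _ _ (fun r hr => cy_zero_ge3 W r hr)]
  have hT0 : cy W 0 = if (v % 3 ≠ 2 ∧ (∀ m ∈ t, m % 3 ≠ 0) ∧ e % 3 = 1)
      then val (v/3 + (Kst t + ((e-1)/3 + 1))) else 0 := by
    have h0 := cy_eval (W := W) hW (ρ := 0) (u := v) (t := t) (e := e)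
      (by omega) (by omega) (by rw [List.rotate_zero])
    rw [h0, Kst_append, Kst_single]
    exact if_congr ⟨fun ⟨a,b,c,_⟩ => ⟨a,b,c⟩,
      fun ⟨a,b,c⟩ => ⟨a,b,c, by split_ifs <;> omega⟩⟩ rfl rfl
  have hT1 : (if 1 < W.length then cy W 1 else 0)
      = if (1 ≤ v ∧ (v-1) % 3 ≠ 2 ∧ (∀ m ∈ t, m % 3 ≠ 0) ∧ (e+1) % 3 = 1)
        then val ((v-1)/3 + (Kst t + (e/3 + 1))) else 0 := by
    rcases Nat.eq_zero_or_pos v with rfl | hv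
    · have hz : ¬(1 ≤ 0 ∧ ((0:ℕ)-1) % 3 ≠ 2 ∧ (∀ m ∈ t, m % 3 ≠ 0) ∧ (e+1) % 3 = 1) :=
        fun h => absurd h.1 (by omega)
      rw [if_neg hz]
      split_ifs with hn
      · apply cy_zero_of_last_B hW
        obtain ⟨m, ms', hms⟩ : ∃ m ms', t ++ [e] = m :: ms' := by
          rcases t with _ | ⟨a, t'⟩
          exacts [⟨e, [], rfl⟩, ⟨a, t' ++ [e], rfl⟩]
        rw [hWdef, hms]
        exact rotate_afterB_getLast 0 m ms' (by
          rw [← hms]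
          show 0 + 1 ≤ (pstr 0 (t ++ [e])).length
          rw [← hWdef]; omega)
      · rfl
    · rw [if_pos (by omega : 1 < W.length)]
      have h1 := cy_eval (W := W) hW (ρ := 1) (u := v-1) (t := t) (e := e+1)
        (by omega) (by omega) (by rw [hWdef, rotate_first_form v 1 hv t e])
      rw [h1, Kst_append, Kst_single, show e + 1 - 1 = e from rfl]
      exact if_congr ⟨fun ⟨a,b,c,_⟩ => ⟨hv,a,b,c⟩,
        fun ⟨_,a,b,c⟩ => ⟨a,b,c, by split_ifs <;> omega⟩⟩ rfl rfl
  rw [hT0, hT1, if_pos (show 0 < W.length by omega)]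
  have finisher := 0  -- dummy
  clear finisher
  rcases v with _ | _ | v2
  · -- v = 0
    have hT1z : (if (1 ≤ 0 ∧ ((0:ℕ)-1) % 3 ≠ 2 ∧ (∀ m ∈ t, m % 3 ≠ 0) ∧ (e+1) % 3 = 1)
        then val (((0:ℕ)-1)/3 + (Kst t + (e/3 + 1))) else 0) = 0 :=
      if_neg (by rintro ⟨h, -⟩; omega)
    rw [hT1z, add_zero]
    rcases t with _ | ⟨m1, t'⟩
    · -- t = [], W = B A^e
      have hlen' : W.length = 1 + e := by rw [hWdef, pstr_length]; simp
      by_cases h2n : 2 < W.length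
      · have he2 : 2 ≤ e := by omega
        have hrot2 : W.rotate 2 = pstr (e-1) ([] ++ [1]) := by
          have hl : ([] : List ℕ) ++ [e] = ((e-1)+1) :: [] := by simp; omega
          rw [hWdef, hl, rotate_ABA (e-1) []]
        have h2 := cy_eval (W := W) hW (ρ := 2) (u := e-1) (t := []) (e := 1)
          (by omega) (by omega) hrot2
        rw [if_pos h2n, h2, show lastInc (e - 1) [] = e - 1 from rfl]
        simp only [Kst_nil, Kst_append, Kst_single, List.not_mem_nil, false_implies,
          implies_true, true_and, zero_add, lastInc]
        split_ifs <;> (try simp only [zero_add, add_zero]) <;>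
          first
            | rfl
            | (exact congrArg val (by omega))
            | (exfalso; omega)
      · rw [if_neg h2n]
        have he1 : e ≤ 1 := by omega
        simp only [Kst_nil, List.not_mem_nil, false_implies, implies_true, true_and, zero_add]
        split_ifs <;> (try simp only [zero_add, add_zero]) <;>
          first
            | rfl
            | (exact congrArg val (by omega))
            | (exfalso; omega)
    · rcases m1 with _ | m1'
      · -- t = 0 :: t' : no parsings at all
        have hbad : ¬ (∀ m ∈ (0 :: t' : List ℕ), m % 3 ≠ 0) := fun h => (h 0 (by simp)) rfl
        have hrhs : (if ((∀ m ∈ (0 :: t' : List ℕ), m % 3 ≠ 0) ∧ (e + 0) % 3 ≠ 0)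
            then val (Kst (0 :: t') + (e + 0 - 1)/3 + 1) else 0) = 0 :=
          if_neg (fun hc => hbad hc.1)
        have ht0 : (if ((0:ℕ) % 3 ≠ 2 ∧ (∀ m ∈ (0 :: t' : List ℕ), m % 3 ≠ 0) ∧ e % 3 = 1)
            then val ((0:ℕ)/3 + (Kst (0 :: t') + ((e-1)/3 + 1))) else 0) = 0 :=
          if_neg (fun hc => hbad hc.2.1)
        rw [hrhs, ht0, zero_add]
        by_cases h2n : 2 < W.length
        · rw [if_pos h2n]
          apply cy_zero_of_last_B hW
          obtain ⟨s, hsh⟩ : ∃ s, W = B :: B :: s := by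
            rw [hWdef, pstr_zero, List.cons_append, canon_cons]
            rcases t' with _ | ⟨a, t''⟩
            · refine ⟨List.replicate e A, ?_⟩
              simp [canon_cons, canon_nil]
            · refine ⟨List.replicate a A ++ canon (t'' ++ [e]), ?_⟩
              simp [canon_cons]
          rw [hsh]
          exact rotate_BB_getLast _
        · rw [if_neg h2n]
      · -- t = (m1'+1) :: t'
        have hms : ((m1'+1) :: t') ++ [e] = (m1'+1) :: (t' ++ [e]) := by simp
        have hn3 : 2 < W.length := by
          have h1 : ((m1'+1) :: t').sum = m1' + 1 + t'.sum := by rw [List.sum_cons]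
          have h2 : ((m1'+1) :: t').length = t'.length + 1 := rfl
          omega
        have hrot2 : W.rotate 2 = pstr m1' ((t' ++ [e]) ++ [1]) := by
          rw [hWdef, hms, rotate_ABA m1' (t' ++ [e])]
        have h2 := cy_eval (W := W) hW (ρ := 2) (u := m1') (t := t' ++ [e]) (e := 1)
          (by omega) (by omega) hrot2
        rw [if_pos hn3, h2]
        simp only [Kst_append, Kst_single, Kst_cons, Kst_nil, lastInc_concat,
          List.forall_mem_cons, List.forall_mem_append, List.forall_mem_singleton,
          List.not_mem_nil, false_implies, implies_true, true_and, and_true]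
        by_cases hP : ∀ m ∈ t', m % 3 ≠ 0
        · simp only [eq_true hP, true_and, and_true]
          split_ifs <;> (try simp only [zero_add, add_zero]) <;>
            first
              | rfl
              | (exact congrArg val (by omega))
              | (exfalso; omega)
        · simp only [eq_false hP, false_and, and_false, if_false]
          simp
  · -- v = 1
    by_cases h2n : 2 < W.length
    · rw [if_pos h2n]
      have hlast : cy W 2 = 0 := by
        apply cy_zero_of_last_B hW
        obtain ⟨m, ms', hms⟩ : ∃ m ms', t ++ [e] = m :: ms' := by
          rcases t with _ | ⟨a, t'⟩
          exacts [⟨e, [], rfl⟩, ⟨a, t' ++ [e], rfl⟩]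
        rw [hWdef, hms]
        exact rotate_afterB_getLast 1 m ms' (by
          rw [← hms]
          show 1 + 1 ≤ (pstr 1 (t ++ [e])).length
          rw [← hWdef]; omega)
      rw [hlast]
      by_cases hP : ∀ m ∈ t, m % 3 ≠ 0
      · simp only [eq_true hP, true_and, and_true]
        split_ifs <;> (try simp only [zero_add, add_zero]) <;>
          first
            | rfl
            | (exact congrArg val (by omega))
            | (exfalso; omega)
      · simp only [eq_false hP, false_and, and_false, true_and, if_false]
        simp
    · rw [if_neg h2n]
      by_cases hP : ∀ m ∈ t, m % 3 ≠ 0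
      · simp only [eq_true hP, true_and, and_true]
        split_ifs <;> (try simp only [zero_add, add_zero]) <;>
          first
            | rfl
            | (exact congrArg val (by omega))
            | (exfalso; omega)
      · simp only [eq_false hP, false_and, and_false, true_and, if_false]
        simp
  · -- v = v2 + 2
    have hn3 : 2 < W.length := by omega
    have hrot2 : W.rotate 2 = pstr v2 (t ++ [e+2]) := by
      rw [hWdef]
      have h := rotate_first_form (v2+2) 2 (by omega) t e
      rw [show v2+2-2 = v2 from rfl] at h
      exact h
    have h2 := cy_eval (W := W) hW (ρ := 2) (u := v2) (t := t) (e := e+2)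
      (by omega) (by omega) hrot2
    rw [if_pos hn3, h2, Kst_append, Kst_single]
    by_cases hP : ∀ m ∈ t, m % 3 ≠ 0
    · simp only [eq_true hP, true_and, and_true]
      split_ifs <;> (try simp only [zero_add, add_zero]) <;>
        first
          | rfl
          | (exact congrArg val (by omega))
          | (exfalso; omega)
    · simp only [eq_false hP, false_and, and_false, true_and, if_false]
      simp

lemma canon'_append (s t : List ℕ) : canon' (s ++ t) = canon' s ++ canon' t := by
  simp [canon']

lemma canon_rev : ∀ (ms : List ℕ), (canon ms).reverse = canon' ms.reverse := by
  intro ms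
  induction ms with
  | nil => rfl
  | cons m t ih =>
    rw [canon_cons, List.reverse_cons, List.reverse_append, List.reverse_replicate, ih,
      List.reverse_cons, canon'_append, List.append_assoc]
    congr 1
    simp [canon']

lemma aux_canon' : ∀ (s : List ℕ) (v : ℕ),
    B :: (canon' s ++ List.replicate v A) = canon (s ++ [v]) := by
  intro s
  induction s with
  | nil =>
    intro v
    rw [canon'_nil, List.nil_append, List.nil_append, canon_cons, canon_nil, List.append_nil]
  | cons c s' ih =>
    intro v
    have hc : canon ((c :: s') ++ [v]) = B :: (List.replicate c A ++ canon (s' ++ [v])) := by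
      rw [show ((c :: s') ++ [v]) = c :: (s' ++ [v]) from rfl, canon_cons]
    rw [canon'_cons, hc, ← ih v]
    simp [List.append_assoc]

lemma pstr_reverse (v a : ℕ) (s ms : List ℕ) (hms : ms.reverse = a :: s) :
    (pstr v ms).reverse = pstr a (s ++ [v]) := by
  rw [pstr, List.reverse_append, List.reverse_replicate, canon_rev, hms, canon'_cons,
    List.append_assoc, List.append_assoc, pstr]
  congr 1
  rw [List.singleton_append, aux_canon']

lemma exists_rep_split : ∀ (S : PWord), (∀ l ∈ S, l = A ∨ l = B) → B ∈ S →
    ∃ v T, S = List.replicate v A ++ B :: T := by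
  intro S
  induction S with
  | nil => intro _ h; simp at h
  | cons c S' ih =>
    intro hAB hB
    rcases hAB c (by simp) with rfl | rfl
    · have hB' : B ∈ S' := by
        rcases List.mem_cons.1 hB with h | h
        · exact absurd h (by simp)
        · exact h
      obtain ⟨v, T, hvT⟩ := ih (fun l hl => hAB l (by simp [hl])) hB'
      exact ⟨v + 1, T, by rw [hvT, List.replicate_succ]; rfl⟩
    · exact ⟨0, S', rfl⟩

lemma toCanon : ∀ (n : ℕ) (T : PWord), T.length ≤ n → (∀ l ∈ T, l = A ∨ l = B) →
    ∃ ms, ms ≠ [] ∧ B :: T = canon ms := by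
  intro n
  induction n with
  | zero =>
    intro T hlen _
    obtain rfl : T = [] := by
      cases T
      · rfl
      · simp at hlen
    exact ⟨[0], by simp, by rw [canon_cons]; rfl⟩
  | succ n ih =>
    intro T hlen hAB
    by_cases hB : B ∈ T
    · obtain ⟨v, T', hvT⟩ := exists_rep_split T hAB hB
      have hlen' : T'.length ≤ n := by
        have := congrArg List.length hvT
        simp at this
        omega
      obtain ⟨ms', hne', hcan'⟩ := ih T' hlen' (fun l hl => hAB l (by
        rw [hvT]
        simp [hl]))
      refine ⟨v :: ms', by simp, ?_⟩
      rw [canon_cons, hvT, hcan']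
    · have : T = List.replicate T.length A := by
        apply List.eq_replicate_of_mem
        intro b hb
        rcases hAB b hb with rfl | rfl
        · rfl
        · exact absurd hb hB
      refine ⟨[T.length], by simp, ?_⟩
      rw [canon_cons, canon_nil, List.append_nil, ← this]

lemma exists_pstr (W : PWord) (hAB : ∀ l ∈ W, l = A ∨ l = B) (hB : B ∈ W) :
    ∃ v t e, W = pstr v (t ++ [e]) := by
  obtain ⟨v, T, rfl⟩ := exists_rep_split W hAB hB
  obtain ⟨ms, hne, hcan⟩ := toCanon T.length T le_rfl (fun l hl => hAB l (by simp [hl]))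
  obtain ⟨t, e, rfl⟩ : ∃ t e, ms = t ++ [e] := by
    rcases List.eq_nil_or_concat ms with rfl | ⟨t, e, h⟩
    · exact absurd rfl hne
    · exact ⟨t, e, by rw [h, List.concat_eq_append]⟩
  exact ⟨v, t, e, by rw [pstr, ← hcan]⟩

lemma Kst_reverse (t : List ℕ) : Kst t.reverse = Kst t := by
  rw [Kst, Kst, List.map_reverse, List.sum_reverse, List.length_reverse]

end RevAux

open PLetter RevAux in
theorem cyclic_reversal_noX_aux (W : PWord) (hW : ∀ l ∈ W, l ≠ X) :
    cycVal W = cycVal W.reverse := by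
  by_cases hB : B ∈ W
  · have hAB : ∀ l ∈ W, l = A ∨ l = B := by
      intro l hl
      cases l
      · exact Or.inl rfl
      · exact absurd rfl (hW _ hl)
      · exact Or.inr rfl
    obtain ⟨v, t, e, rfl⟩ := exists_pstr W hAB hB
    have hrev : (pstr v (t ++ [e])).reverse = pstr e (t.reverse ++ [v]) := by
      apply pstr_reverse
      rw [List.reverse_append]
      rfl
    rw [hrev, master v t e, master e t.reverse v]
    have hKst : Kst t.reverse = Kst t := Kst_reverse t
    refine if_congr ?_ ?_ rfl
    · constructor
      · rintro ⟨h1, h2⟩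
        exact ⟨fun m hm => h1 m (List.mem_reverse.1 hm), by omega⟩
      · rintro ⟨h1, h2⟩
        exact ⟨fun m hm => h1 m (List.mem_reverse.2 hm), by omega⟩
    · exact congrArg val (by omega)
  · have hA : ∀ l ∈ W, l = A := by
      intro l hl
      cases l
      · rfl
      · exact absurd rfl (hW _ hl)
      · exact absurd hl hB
    have : W = List.replicate W.length A := List.eq_replicate_of_mem hA
    rw [this, List.reverse_replicate]

open PLetter in
/-- For every finite string `W` over `{A, B}` (no letter `X`), the cyclic values in
the tight puzzle satisfy `|(W)| = |(W̄)|`. -/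
theorem cyclic_reversal_noX (W : PWord) (hW : ∀ l ∈ W, l ≠ X) :
    cycVal W = cycVal W.reverse :=
  cyclic_reversal_noX_aux W hW
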